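/- Let A be a closed densely defined skew-symmetric operator on a real Hilbert space H, and let B be an m-dissipative operator on H (i.e., (Bu,u) ≤ 0 for all u ∈ D(B) and Range(I − hB) = H for all h > 0). Then B ⊆ A* if and only if −A ⊆ B. -/
import Mathlib


local notation "⟪" x ", " y "⟫" => @inner ℝ _ _ x y

private lemma linear_coeff_zero {b c : ℝ} (h : ∀ t : ℝ, c + t * b ≤ 0) : b = 0 := by
  by_contra hb
  have h1 := h ((1 - c) / b)
  rw [div_mul_cancel₀ _ hb] at h1
  linarith

/-- Let `A` be a closed densely defined skew-symmetric operator on a real Hilbert space `H` and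
`B` an `m`-dissipative operator (`(Bu,u) ≤ 0` on `D(B)` and `Range(I − hB) = H` for all `h > 0`).
Then `B ⊆ A*` iff `−A ⊆ B`. -/
theorem le_adjoint_iff_neg_le
    {H : Type*} [NormedAddCommGroup H] [InnerProductSpace ℝ H] [CompleteSpace H]
    (A B : H →ₗ.[ℝ] H) (hAdense : Dense (A.domain : Set H)) (hAclosed : A.IsClosed)
    (hskew : ∀ u v : A.domain, ⟪A u, (v : H)⟫ = -⟪(u : H), A v⟫)
    (hdiss : ∀ u : B.domain, ⟪B u, (u : H)⟫ ≤ 0)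
    (hm : ∀ h : ℝ, 0 < h → ∀ v : H, ∃ u : B.domain, (u : H) - h • B u = v) :
    B ≤ A.adjoint ↔ -A ≤ B := by
  have hAu0 : ∀ u : A.domain, ⟪A u, (u : H)⟫ = 0 := by
    intro u
    have h1 := hskew u u
    have h2 := real_inner_comm (A u) ((u : H))
    linarith
  have hFA := LinearPMap.adjoint_isFormalAdjoint hAdense
  constructor
  · -- B ≤ A† → −A ≤ B
    intro h
    have key : ∀ u : A.domain, ∃ hu : (u : H) ∈ B.domain, B ⟨(u : H), hu⟩ = -(A u) := by
      intro u
      obtain ⟨w, hw⟩ := hm 1 one_pos ((u : H) + A u)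
      rw [one_smul] at hw
      have hwadj : (w : H) ∈ A.adjoint.domain := h.1 w.2
      have hBw : B w = A.adjoint ⟨(w : H), hwadj⟩ := h.2 rfl
      have hBw_eq : B w = ((w : H) - (u : H)) - A u := by
        rw [sub_sub, ← hw]; abel
      have c1 : ⟪B w, (u : H)⟫ = ⟪(w : H), A u⟫ := by
        rw [hBw]; exact hFA ⟨(w : H), hwadj⟩ u
      have c2 : ⟪A u, (u : H)⟫ = 0 := hAu0 u
      have target : ⟪B w, (w : H)⟫ = ⟪(w : H) - (u : H), (w : H) - (u : H)⟫ := by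
        have expand1 : ⟪B w, (w : H)⟫
            = ⟪(w : H), (w : H)⟫ - ⟪(u : H), (w : H)⟫ - ⟪A u, (w : H)⟫ := by
          rw [hBw_eq, inner_sub_left, inner_sub_left]
        have expand2 : ⟪(w : H) - (u : H), (w : H) - (u : H)⟫
            = ⟪(w : H), (w : H)⟫ - ⟪(w : H), (u : H)⟫ - ⟪(u : H), (w : H)⟫
              + ⟪(u : H), (u : H)⟫ := by
          rw [inner_sub_left, inner_sub_right, inner_sub_right]; ring
        have expand3 : ⟪B w, (u : H)⟫
            = ⟪(w : H), (u : H)⟫ - ⟪(u : H), (u : H)⟫ - ⟪A u, (u : H)⟫ := by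
          rw [hBw_eq, inner_sub_left, inner_sub_left]
        have comm1 : ⟪A u, (w : H)⟫ = ⟪(w : H), A u⟫ := real_inner_comm _ _
        have comm2 : ⟪(u : H), (w : H)⟫ = ⟪(w : H), (u : H)⟫ := real_inner_comm _ _
        linarith
      have hz : (w : H) - (u : H) = 0 := by
        have hd := hdiss w
        exact real_inner_self_nonpos.mp (by linarith)
      have hwu : (w : H) = (u : H) := by rwa [sub_eq_zero] at hz
      have hmem : (u : H) ∈ B.domain := hwu ▸ w.2
      refine ⟨hmem, ?_⟩
      have hsub : (⟨(u : H), hmem⟩ : B.domain) = w := Subtype.ext hwu.symm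
      rw [hsub, hBw_eq, hwu]
      simp
    refine ⟨fun x hx => ?_, fun x y hxy => ?_⟩
    · obtain ⟨hu, -⟩ := key ⟨x, hx⟩
      exact hu
    · obtain ⟨hu, hval⟩ := key ⟨(x : H), x.2⟩
      have hy : y = ⟨(x : H), hu⟩ := Subtype.ext hxy.symm
      rw [hy, hval, LinearPMap.neg_apply]
      rfl
  · -- −A ≤ B → B ≤ A†
    intro h
    refine LinearPMap.IsFormalAdjoint.le_adjoint hAdense ?_
    intro x y
    -- x : A.domain, y : B.domain ⊢ ⟪A x, ↑y⟫ = ⟪↑x, B y⟫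
    have hxB : (x : H) ∈ B.domain := h.1 x.2
    have hBx : B ⟨(x : H), hxB⟩ = -(A x) := by
      have h2 := h.2 (x := (⟨(x : H), x.2⟩ : (-A).domain)) (y := ⟨(x : H), hxB⟩) rfl
      rw [LinearPMap.neg_apply] at h2
      exact h2.symm
    have hb : ⟪B y, (x : H)⟫ - ⟪A x, (y : H)⟫ = 0 := by
      apply linear_coeff_zero (c := ⟪B y, (y : H)⟫)
      intro t
      have hd := hdiss (y + t • ⟨(x : H), hxB⟩)
      have happ : B (y + t • (⟨(x : H), hxB⟩ : B.domain))
          = B y + t • B ⟨(x : H), hxB⟩ := by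
        rw [B.map_add, B.map_smul]
      have hcoe : ((y + t • (⟨(x : H), hxB⟩ : B.domain) : B.domain) : H)
          = (y : H) + t • (x : H) := rfl
      rw [happ, hcoe, hBx] at hd
      have c0 : ⟪A x, (x : H)⟫ = 0 := hAu0 x
      simp only [inner_add_left, inner_add_right, real_inner_smul_left,
        real_inner_smul_right, inner_neg_left, smul_neg, c0, mul_zero, neg_zero,
        mul_neg] at hd
      nlinarith [hd]
    have comm1 : ⟪(x : H), B y⟫ = ⟪B y, (x : H)⟫ := real_inner_comm _ _
    linarith
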